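/- For every r ≥ 2 there is a constant A_r > 0 such that the following holds. Let n ≥ 1, k ≥ 1, and let h : E(K_{rn}^{(r)}) → ℝ^k satisfy ‖h(e)‖₁ ≤ 1 for every hyperedge e. Then the vertex set of K_{rn}^{(r)} can be partitioned into r parts V₁,…,V_r each of size n such that the set H of hyperedges meeting every part in exactly one vertex satisfies ‖h(H) − (n^r/C(rn,r))·h(E(K_{rn}^{(r)}))‖₁ ≤ A_r·√k·n^{r−1}. -/

import Mathlib

open Finset


lemma glue4 {α : Type*} [Fintype α] [DecidableEq α] (e f e' f' : Finset α)
    (he : e.card = e'.card) (hf : f.card = f'.card)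
    (hef : (e ∩ f).card = (e' ∩ f').card) :
    ∃ τ : Equiv.Perm α, e.image τ = e' ∧ f.image τ = f' := by
  classical
  have h2 : (e \ f).card = (e' \ f').card := by
    have := Finset.card_inter_add_card_sdiff e f
    have := Finset.card_inter_add_card_sdiff e' f'
    omega
  have h3 : (f \ e).card = (f' \ e').card := by
    have := Finset.card_inter_add_card_sdiff f e
    have := Finset.card_inter_add_card_sdiff f' e'
    have : (f ∩ e).card = (e ∩ f).card := by rw [Finset.inter_comm]
    have : (f' ∩ e').card = (e' ∩ f').card := by rw [Finset.inter_comm]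
    omega
  have h4 : ((e ∪ f)ᶜ : Finset α).card = ((e' ∪ f')ᶜ : Finset α).card := by
    have := Finset.card_union_add_card_inter e f
    have := Finset.card_union_add_card_inter e' f'
    have := Finset.card_compl (e ∪ f)
    have := Finset.card_compl (e' ∪ f')
    omega
  let u1 := Finset.equivOfCardEq hef
  let u2 := Finset.equivOfCardEq h2
  let u3 := Finset.equivOfCardEq h3
  let u4 := Finset.equivOfCardEq h4
  have hmem4 : ∀ x : α, x ∉ e ∩ f → x ∉ e \ f → x ∉ f \ e → x ∈ (e ∪ f)ᶜ := by
    intro x h1 h2 h3; simp only [Finset.mem_inter, Finset.mem_sdiff, Finset.mem_compl,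
      Finset.mem_union] at *; tauto
  have hmem4' : ∀ x : α, x ∉ e' ∩ f' → x ∉ e' \ f' → x ∉ f' \ e' → x ∈ (e' ∪ f')ᶜ := by
    intro x h1 h2 h3; simp only [Finset.mem_inter, Finset.mem_sdiff, Finset.mem_compl,
      Finset.mem_union] at *; tauto
  set F : α → α := fun x =>
    if h : x ∈ e ∩ f then u1 ⟨x, h⟩ else
    if h : x ∈ e \ f then u2 ⟨x, h⟩ else
    if h : x ∈ f \ e then u3 ⟨x, h⟩ else u4 ⟨x, by exact hmem4 x (by assumption) (by assumption) (by assumption)⟩ with hF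
  set G : α → α := fun x =>
    if h : x ∈ e' ∩ f' then u1.symm ⟨x, h⟩ else
    if h : x ∈ e' \ f' then u2.symm ⟨x, h⟩ else
    if h : x ∈ f' \ e' then u3.symm ⟨x, h⟩ else u4.symm ⟨x, by exact hmem4' x (by assumption) (by assumption) (by assumption)⟩ with hG
  have hGF : Function.LeftInverse G F := by
    intro x
    by_cases h1 : x ∈ e ∩ f
    · have hy : (u1 ⟨x, h1⟩ : α) ∈ e' ∩ f' := (u1 ⟨x, h1⟩).2
      simp only [hF, hG, dif_pos h1, dif_pos hy, Subtype.coe_eta, Equiv.symm_apply_apply]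
    · by_cases h2 : x ∈ e \ f
      · have hy : (u2 ⟨x, h2⟩ : α) ∈ e' \ f' := (u2 ⟨x, h2⟩).2
        have hy1 : (u2 ⟨x, h2⟩ : α) ∉ e' ∩ f' := by
          simp only [Finset.mem_sdiff] at hy; simp only [Finset.mem_inter]; tauto
        simp only [hF, hG, dif_neg h1, dif_pos h2, dif_neg hy1, dif_pos hy, Subtype.coe_eta,
          Equiv.symm_apply_apply]
      · by_cases h3 : x ∈ f \ e
        · have hy : (u3 ⟨x, h3⟩ : α) ∈ f' \ e' := (u3 ⟨x, h3⟩).2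
          have hy1 : (u3 ⟨x, h3⟩ : α) ∉ e' ∩ f' := by
            simp only [Finset.mem_sdiff] at hy; simp only [Finset.mem_inter]; tauto
          have hy2 : (u3 ⟨x, h3⟩ : α) ∉ e' \ f' := by
            simp only [Finset.mem_sdiff] at hy ⊢; tauto
          simp only [hF, hG, dif_neg h1, dif_neg h2, dif_pos h3, dif_neg hy1, dif_neg hy2,
            dif_pos hy, Subtype.coe_eta, Equiv.symm_apply_apply]
        · have h4 := hmem4 x h1 h2 h3
          have hy : (u4 ⟨x, h4⟩ : α) ∈ (e' ∪ f')ᶜ := (u4 ⟨x, h4⟩).2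
          have hy' : (u4 ⟨x, h4⟩ : α) ∉ e' ∧ (u4 ⟨x, h4⟩ : α) ∉ f' := by
            simpa only [Finset.mem_compl, Finset.mem_union, not_or] using hy
          have hy1 : (u4 ⟨x, h4⟩ : α) ∉ e' ∩ f' := by
            simp only [Finset.mem_inter]; tauto
          have hy2 : (u4 ⟨x, h4⟩ : α) ∉ e' \ f' := by
            simp only [Finset.mem_sdiff]; tauto
          have hy3 : (u4 ⟨x, h4⟩ : α) ∉ f' \ e' := by
            simp only [Finset.mem_sdiff]; tauto
          simp only [hF, hG, dif_neg h1, dif_neg h2, dif_neg h3, dif_neg hy1, dif_neg hy2,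
            dif_neg hy3, Subtype.coe_eta, Equiv.symm_apply_apply]
  have hFG : Function.RightInverse G F := by
    intro x
    by_cases h1 : x ∈ e' ∩ f'
    · have hy : (u1.symm ⟨x, h1⟩ : α) ∈ e ∩ f := (u1.symm ⟨x, h1⟩).2
      simp only [hF, hG, dif_pos h1, dif_pos hy, Subtype.coe_eta, Equiv.apply_symm_apply]
    · by_cases h2 : x ∈ e' \ f'
      · have hy : (u2.symm ⟨x, h2⟩ : α) ∈ e \ f := (u2.symm ⟨x, h2⟩).2
        have hy1 : (u2.symm ⟨x, h2⟩ : α) ∉ e ∩ f := by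
          simp only [Finset.mem_sdiff] at hy; simp only [Finset.mem_inter]; tauto
        simp only [hF, hG, dif_neg h1, dif_pos h2, dif_neg hy1, dif_pos hy, Subtype.coe_eta,
          Equiv.apply_symm_apply]
      · by_cases h3 : x ∈ f' \ e'
        · have hy : (u3.symm ⟨x, h3⟩ : α) ∈ f \ e := (u3.symm ⟨x, h3⟩).2
          have hy1 : (u3.symm ⟨x, h3⟩ : α) ∉ e ∩ f := by
            simp only [Finset.mem_sdiff] at hy; simp only [Finset.mem_inter]; tauto
          have hy2 : (u3.symm ⟨x, h3⟩ : α) ∉ e \ f := by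
            simp only [Finset.mem_sdiff] at hy ⊢; tauto
          simp only [hF, hG, dif_neg h1, dif_neg h2, dif_pos h3, dif_neg hy1, dif_neg hy2,
            dif_pos hy, Subtype.coe_eta, Equiv.apply_symm_apply]
        · have h4 := hmem4' x h1 h2 h3
          have hy : (u4.symm ⟨x, h4⟩ : α) ∈ (e ∪ f)ᶜ := (u4.symm ⟨x, h4⟩).2
          have hy' : (u4.symm ⟨x, h4⟩ : α) ∉ e ∧ (u4.symm ⟨x, h4⟩ : α) ∉ f := by
            simpa only [Finset.mem_compl, Finset.mem_union, not_or] using hy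
          have hy1 : (u4.symm ⟨x, h4⟩ : α) ∉ e ∩ f := by
            simp only [Finset.mem_inter]; tauto
          have hy2 : (u4.symm ⟨x, h4⟩ : α) ∉ e \ f := by
            simp only [Finset.mem_sdiff]; tauto
          have hy3 : (u4.symm ⟨x, h4⟩ : α) ∉ f \ e := by
            simp only [Finset.mem_sdiff]; tauto
          simp only [hF, hG, dif_neg h1, dif_neg h2, dif_neg h3, dif_neg hy1, dif_neg hy2,
            dif_neg hy3, Subtype.coe_eta, Equiv.apply_symm_apply]
  refine ⟨⟨F, G, hGF, hFG⟩, ?_, ?_⟩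
  · apply Finset.eq_of_subset_of_card_le
    · intro y hy
      simp only [Finset.mem_image] at hy
      obtain ⟨x, hx, rfl⟩ := hy
      show F x ∈ e'
      by_cases h1 : x ∈ e ∩ f
      · have := (u1 ⟨x, h1⟩).2
        simp only [hF, dif_pos h1]
        exact (Finset.mem_inter.mp this).1
      · have h2 : x ∈ e \ f := by
          simp only [Finset.mem_inter, not_and] at h1
          simp only [Finset.mem_sdiff]; exact ⟨hx, h1 hx⟩
        have := (u2 ⟨x, h2⟩).2
        simp only [hF, dif_neg h1, dif_pos h2]
        exact (Finset.mem_sdiff.mp this).1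
    · rw [Finset.card_image_of_injective _ (Equiv.injective ⟨F, G, hGF, hFG⟩)]
      exact le_of_eq he.symm
  · apply Finset.eq_of_subset_of_card_le
    · intro y hy
      simp only [Finset.mem_image] at hy
      obtain ⟨x, hx, rfl⟩ := hy
      show F x ∈ f'
      by_cases h1 : x ∈ e ∩ f
      · have := (u1 ⟨x, h1⟩).2
        simp only [hF, dif_pos h1]
        exact (Finset.mem_inter.mp this).2
      · have h2 : x ∉ e \ f := by
          simp only [Finset.mem_sdiff]; tauto
        have h3 : x ∈ f \ e := by
          simp only [Finset.mem_inter, not_and] at h1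
          simp only [Finset.mem_sdiff]
          refine ⟨hx, fun hxe => ?_⟩
          exact (h1 hxe) hx
        have := (u3 ⟨x, h3⟩).2
        simp only [hF, dif_neg h1, dif_neg h2, dif_pos h3]
        exact (Finset.mem_sdiff.mp this).1
    · rw [Finset.card_image_of_injective _ (Equiv.injective ⟨F, G, hGF, hFG⟩)]
      exact le_of_eq hf.symm

variable (r n : ℕ)

def pz : Fin (r * n) → Fin r := fun v => (finProdFinEquiv.symm v).1

def KK : Finset (Finset (Fin (r * n))) := Finset.powersetCard r Finset.univ

def TT : Finset (Finset (Fin (r * n))) :=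
  KK r n |>.filter (fun s => ∀ p : Fin r, (s.filter fun v => pz r n v = p).card = 1)

def Phi (g : Fin r → Fin n) : Finset (Fin (r * n)) :=
  Finset.image (fun p => finProdFinEquiv (p, g p)) Finset.univ

lemma pz_apply (p : Fin r) (x : Fin n) : pz r n (finProdFinEquiv (p, x)) = p := by
  simp [pz]

lemma pz_eq (v : Fin (r * n)) : finProdFinEquiv (pz r n v, (finProdFinEquiv.symm v).2) = v := by
  show finProdFinEquiv ((finProdFinEquiv.symm v).1, (finProdFinEquiv.symm v).2) = v
  rw [Prod.mk.eta, Equiv.apply_symm_apply]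

lemma Phi_filter (g : Fin r → Fin n) (p : Fin r) :
    (Phi r n g).filter (fun v => pz r n v = p) = {finProdFinEquiv (p, g p)} := by
  ext x
  simp only [Phi, Finset.mem_filter, Finset.mem_image, Finset.mem_univ, true_and,
    Finset.mem_singleton]
  constructor
  · rintro ⟨⟨q, rfl⟩, hq⟩
    rw [pz_apply] at hq
    subst hq; rfl
  · rintro rfl
    exact ⟨⟨p, rfl⟩, pz_apply r n p (g p)⟩

lemma Phi_card (g : Fin r → Fin n) : (Phi r n g).card = r := by
  rw [Phi, Finset.card_image_of_injective, Finset.card_univ, Fintype.card_fin]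
  intro p q hpq
  have := congrArg (fun v => (finProdFinEquiv.symm v).1) hpq
  simpa using this

lemma Phi_mem_T (g : Fin r → Fin n) : Phi r n g ∈ TT r n := by
  rw [TT, Finset.mem_filter]
  refine ⟨by rw [KK, Finset.mem_powersetCard]; exact ⟨Finset.subset_univ _, Phi_card r n g⟩, ?_⟩
  intro p
  rw [Phi_filter]
  exact Finset.card_singleton _

lemma T_eq_image : TT r n = Finset.image (Phi r n) Finset.univ := by
  apply Finset.Subset.antisymm
  · intro s hs
    rw [TT, Finset.mem_filter, KK, Finset.mem_powersetCard] at hs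
    obtain ⟨⟨-, hcard⟩, htr⟩ := hs
    have hne : ∀ p : Fin r, (s.filter fun v => pz r n v = p).Nonempty := by
      intro p
      rw [← Finset.card_pos, htr p]; norm_num
    set g : Fin r → Fin n := fun p => (finProdFinEquiv.symm ((s.filter fun v => pz r n v = p).min' (hne p))).2 with hg
    have hmem : ∀ p : Fin r, finProdFinEquiv (p, g p) ∈ s := by
      intro p
      obtain ⟨m, hm⟩ : ∃ m, m = (s.filter fun v => pz r n v = p).min' (hne p) := ⟨_, rfl⟩
      have hgp : g p = (finProdFinEquiv.symm m).2 := by simp only [hg]; rw [← hm]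
      have hmm := Finset.min'_mem _ (hne p)
      rw [← hm, Finset.mem_filter] at hmm
      rw [hgp, ← hmm.2, pz_eq]
      exact hmm.1
    have hsub : Phi r n g ⊆ s := by
      intro x hx
      rw [Phi, Finset.mem_image] at hx
      obtain ⟨p, -, rfl⟩ := hx
      exact hmem p
    have : Phi r n g = s := Finset.eq_of_subset_of_card_le hsub (by rw [Phi_card, hcard])
    rw [Finset.mem_image]
    exact ⟨g, Finset.mem_univ g, this⟩
  · intro s hs
    rw [Finset.mem_image] at hs
    obtain ⟨g, -, rfl⟩ := hs
    exact Phi_mem_T r n g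

lemma Phi_inj : Function.Injective (Phi r n) := by
  intro g g' hgg
  funext p
  have h1 : finProdFinEquiv (p, g p) ∈ (Phi r n g').filter (fun v => pz r n v = p) := by
    rw [Finset.mem_filter, ← hgg]
    constructor
    · rw [Phi, Finset.mem_image]; exact ⟨p, Finset.mem_univ p, rfl⟩
    · exact pz_apply r n p (g p)
  rw [Phi_filter, Finset.mem_singleton] at h1
  have := finProdFinEquiv.injective h1
  exact (Prod.ext_iff.mp this).2

lemma card_T : (TT r n).card = n ^ r := by
  rw [T_eq_image, Finset.card_image_of_injective _ (Phi_inj r n), Finset.card_univ,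
    Fintype.card_fun, Fintype.card_fin, Fintype.card_fin]

lemma card_fiber (p : Fin r) : (Finset.univ.filter fun v => pz r n v = p).card = n := by
  have : (Finset.univ.filter fun v => pz r n v = p) =
      Finset.image (fun x : Fin n => finProdFinEquiv (p, x)) Finset.univ := by
    ext v
    simp only [Finset.mem_filter, Finset.mem_univ, true_and, Finset.mem_image]
    constructor
    · intro hv
      exact ⟨(finProdFinEquiv.symm v).2, by rw [← hv, pz_eq]⟩
    · rintro ⟨x, -, rfl⟩
      exact pz_apply r n p x
  rw [this, Finset.card_image_of_injective, Finset.card_univ, Fintype.card_fin]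
  intro x y hxy
  have := finProdFinEquiv.injective hxy
  exact (Prod.ext_iff.mp this).2

lemma mem_Phi_iff (g : Fin r → Fin n) (u : Fin (r * n)) :
    u ∈ Phi r n g ↔ g (finProdFinEquiv.symm u).1 = (finProdFinEquiv.symm u).2 := by
  constructor
  · intro hu
    rw [Phi, Finset.mem_image] at hu
    obtain ⟨p, -, rfl⟩ := hu
    simp
  · intro hu
    rw [Phi, Finset.mem_image]
    refine ⟨(finProdFinEquiv.symm u).1, Finset.mem_univ _, ?_⟩
    rw [hu, Prod.mk.eta, Equiv.apply_symm_apply]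



lemma count_update (a : Fin r) (b b' : Fin n) :
    (Finset.univ.filter fun g : Fin r → Fin n => g a = b).card =
    (Finset.univ.filter fun g : Fin r → Fin n => g a = b').card := by
  apply Finset.card_bij' (fun g _ => Function.update g a b') (fun g _ => Function.update g a b)
  · intro g hg
    simp only [Finset.mem_filter, Finset.mem_univ, true_and] at hg
    rw [Function.update_idem, ← hg, Function.update_eq_self]
  · intro g hg
    simp only [Finset.mem_filter, Finset.mem_univ, true_and] at hg
    rw [Function.update_idem, ← hg, Function.update_eq_self]
  · intro g hg
    simp
  · intro g hg
    simp

lemma count_swap (a a' : Fin r) (b : Fin n) :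
    (Finset.univ.filter fun g : Fin r → Fin n => g a = b).card =
    (Finset.univ.filter fun g : Fin r → Fin n => g a' = b).card := by
  apply Finset.card_bij' (fun g _ => g ∘ Equiv.swap a a') (fun g _ => g ∘ Equiv.swap a a')
  · intro g hg
    simp only [Finset.mem_filter, Finset.mem_univ, true_and] at *
    simpa [Equiv.swap_apply_right] using hg
  · intro g hg
    simp only [Finset.mem_filter, Finset.mem_univ, true_and] at *
    simpa [Equiv.swap_apply_left] using hg
  · intro g hg
    funext x
    simp [Equiv.swap_apply_self]
  · intro g hg
    funext x
    simp [Equiv.swap_apply_self]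

lemma count_coord (a a' : Fin r) (b b' : Fin n) :
    (Finset.univ.filter fun g : Fin r → Fin n => g a = b).card =
    (Finset.univ.filter fun g : Fin r → Fin n => g a' = b').card := by
  rw [count_update r n a b b', count_swap r n a a' b']

lemma count_T_mem (u u' : Fin (r * n)) :
    ((TT r n).filter fun t => u ∈ t).card = ((TT r n).filter fun t => u' ∈ t).card := by
  have hA : ∀ w : Fin (r * n), ((TT r n).filter fun t => w ∈ t).card =
      (Finset.univ.filter fun g : Fin r → Fin n =>
        g (finProdFinEquiv.symm w).1 = (finProdFinEquiv.symm w).2).card := by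
    intro w
    rw [T_eq_image, Finset.filter_image,
      Finset.card_image_of_injective _ (Phi_inj r n)]
    congr 1
    apply Finset.filter_congr
    intro g _
    simp only [mem_Phi_iff]
  rw [hA u, hA u', count_coord]

noncomputable def Wt (r n : ℕ) (σ : Equiv.Perm (Fin (r * n))) (s : Finset (Fin (r * n))) : ℝ :=
  (if ∀ p : Fin r, (s.filter fun v => pz r n (σ v) = p).card = 1 then 1 else 0) -
    (n : ℝ) ^ r / ((r * n).choose r : ℝ)



lemma main_lemma' (r n k : ℕ) (hr : 2 ≤ r) (hn : 1 ≤ n) (hk : 1 ≤ k)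
    (h : Finset (Fin (r * n)) → Fin k → ℝ)
    (hh : ∀ e ∈ KK r n, ∑ i : Fin k, |h e i| ≤ 1) :
    ∃ σ : Equiv.Perm (Fin (r * n)),
      ∑ i : Fin k,
        |(∑ e ∈ (KK r n).filter
            (fun s => ∀ p : Fin r, (s.filter fun v => pz r n (σ v) = p).card = 1), h e i) -
          ((n : ℝ) ^ r / ((r * n).choose r : ℝ)) * ∑ e ∈ KK r n, h e i|
        ≤ (Real.sqrt ((2 * r + 2) * r ^ 2) * r ^ (r - 1)) * Real.sqrt k * (n : ℝ) ^ (r - 1) := by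
  classical
  have hrn : r ≤ r * n := Nat.le_mul_of_pos_right r hn
  have hCpos : 0 < (r * n).choose r := Nat.choose_pos hrn
  have hCpos' : (0 : ℝ) < ((r * n).choose r : ℝ) := by exact_mod_cast hCpos
  set C : ℝ := ((r * n).choose r : ℝ) with hC
  set p : ℝ := (n : ℝ) ^ r / C with hp
  have hKcard : (KK r n).card = (r * n).choose r := by
    rw [KK, Finset.card_powersetCard, Finset.card_univ, Fintype.card_fin]
  have hTsub : TT r n ⊆ KK r n := Finset.filter_subset _ _
  have hnrC : n ^ r ≤ (r * n).choose r := by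
    rw [← card_T r n, ← hKcard]; exact Finset.card_le_card hTsub
  have hp0 : 0 ≤ p := by
    rw [hp]; positivity
  have hp1 : p ≤ 1 := by
    rw [hp, div_le_one hCpos', hC]
    exact_mod_cast hnrC
  have hpC : p * C = (n : ℝ) ^ r := div_mul_cancel₀ _ (ne_of_gt hCpos')
  have hKmem : ∀ {e : Finset (Fin (r * n))}, e ∈ KK r n → e.card = r := by
    intro e he; rw [KK, Finset.mem_powersetCard] at he; exact he.2
  have hKne : (KK r n).Nonempty := by
    rw [← Finset.card_pos, hKcard]; exact hCpos
  -- transversality via image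
  have htr_iff : ∀ (σ : Equiv.Perm (Fin (r * n))) (s : Finset (Fin (r * n))), s ∈ KK r n →
      ((∀ q : Fin r, (s.filter fun v => pz r n (σ v) = q).card = 1) ↔
        s.image σ ∈ TT r n) := by
    intro σ s hs
    have himg : ∀ q : Fin r, (Finset.image σ s).filter (fun v => pz r n v = q) =
        Finset.image σ (s.filter fun v => pz r n (σ v) = q) := by
      intro q; exact Finset.filter_image
    have hKimg : s.image σ ∈ KK r n := by
      rw [KK, Finset.mem_powersetCard]
      exact ⟨Finset.subset_univ _, by
        rw [Finset.card_image_of_injective _ σ.injective, hKmem hs]⟩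
    constructor
    · intro htr
      rw [TT, Finset.mem_filter]
      refine ⟨hKimg, fun q => ?_⟩
      rw [himg, Finset.card_image_of_injective _ σ.injective]
      exact htr q
    · intro ht q
      rw [TT, Finset.mem_filter] at ht
      have hq := ht.2 q
      rwa [himg, Finset.card_image_of_injective _ σ.injective] at hq
  -- per-σ transversal count
  have hcount : ∀ σ : Equiv.Perm (Fin (r * n)),
      ((KK r n).filter
        (fun s => ∀ q : Fin r, (s.filter fun v => pz r n (σ v) = q).card = 1)).card = n ^ r := by
    intro σ
    rw [← card_T r n]
    refine Finset.card_bij (fun s _ => s.image σ) ?_ ?_ ?_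
    · intro s hs
      rw [Finset.mem_filter] at hs
      exact (htr_iff σ s hs.1).mp hs.2
    · intro a ha b hb hab
      exact Finset.image_injective σ.injective hab
    · intro t ht
      have himgt : (t.image σ.symm).image σ = t := by
        rw [Finset.image_image]
        have : (⇑σ ∘ ⇑σ.symm) = id := by funext x; simp
        rw [this, Finset.image_id]
      have hKt : t.image σ.symm ∈ KK r n := by
        rw [KK, Finset.mem_powersetCard]
        refine ⟨Finset.subset_univ _, ?_⟩
        rw [Finset.card_image_of_injective _ σ.symm.injective, hKmem (hTsub ht)]
      refine ⟨t.image σ.symm, ?_, himgt⟩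
      rw [Finset.mem_filter]
      exact ⟨hKt, (htr_iff σ _ hKt).mpr (by rwa [himgt])⟩
  -- per-σ per-vertex transversal count
  have hcountv : ∀ (σ : Equiv.Perm (Fin (r * n))) (v : Fin (r * n)),
      ((KK r n).filter (fun s => v ∈ s ∧
        ∀ q : Fin r, (s.filter fun w => pz r n (σ w) = q).card = 1)).card =
      ((TT r n).filter (fun t => σ v ∈ t)).card := by
    intro σ v
    refine Finset.card_bij (fun s _ => s.image σ) ?_ ?_ ?_
    · intro s hs
      rw [Finset.mem_filter] at hs ⊢
      refine ⟨(htr_iff σ s hs.1).mp hs.2.2, ?_⟩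
      exact Finset.mem_image_of_mem _ hs.2.1
    · intro a ha b hb hab
      exact Finset.image_injective σ.injective hab
    · intro t ht
      rw [Finset.mem_filter] at ht
      obtain ⟨ht1, ht2⟩ := ht
      have himgt : (t.image σ.symm).image σ = t := by
        rw [Finset.image_image]
        have : (⇑σ ∘ ⇑σ.symm) = id := by funext x; simp
        rw [this, Finset.image_id]
      have hKt : t.image σ.symm ∈ KK r n := by
        rw [KK, Finset.mem_powersetCard]
        refine ⟨Finset.subset_univ _, ?_⟩
        rw [Finset.card_image_of_injective _ σ.symm.injective, hKmem (hTsub ht1)]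
      refine ⟨t.image σ.symm, ?_, himgt⟩
      rw [Finset.mem_filter]
      refine ⟨hKt, ?_, (htr_iff σ _ hKt).mpr (by rwa [himgt])⟩
      have : σ.symm (σ v) ∈ t.image σ.symm := Finset.mem_image_of_mem _ ht2
      simpa using this
  -- reindexing sums over the permutation group
  have hreindex : ∀ (τ : Equiv.Perm (Fin (r * n))) (F : Equiv.Perm (Fin (r * n)) → ℝ),
      ∑ σ : Equiv.Perm (Fin (r * n)), F (σ * τ) = ∑ σ : Equiv.Perm (Fin (r * n)), F σ := by
    intro τ F
    exact Fintype.sum_bijective (· * τ) (Group.mulRight_bijective τ) _ _ (fun σ => rfl)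
  -- Wt under composition
  have hWtau : ∀ (τ σ : Equiv.Perm (Fin (r * n))) (e : Finset (Fin (r * n))),
      Wt r n σ (e.image τ) = Wt r n (σ * τ) e := by
    intro τ σ e
    have hcond : (∀ q : Fin r, ((e.image τ).filter fun v => pz r n (σ v) = q).card = 1) ↔
        (∀ q : Fin r, (e.filter fun v => pz r n ((σ * τ) v) = q).card = 1) := by
      apply forall_congr'
      intro q
      have : ((e.image τ).filter fun v => pz r n (σ v) = q) =
          (e.filter fun v => pz r n (σ (τ v)) = q).image τ := Finset.filter_image
      rw [this, Finset.card_image_of_injective _ τ.injective]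
      rfl
    rw [Wt, Wt, if_congr hcond rfl rfl]
  -- sum of Wt over all edges vanishes for each σ
  have hS4 : ∀ σ : Equiv.Perm (Fin (r * n)), ∑ e ∈ KK r n, Wt r n σ e = 0 := by
    intro σ
    simp only [Wt]
    rw [Finset.sum_sub_distrib, Finset.sum_boole, hcount σ, Finset.sum_const,
      nsmul_eq_mul, hKcard]
    push_cast
    field_simp
    ring
  -- constancy of mean over edges
  have hconst1 : ∀ e e', e ∈ KK r n → e' ∈ KK r n →
      ∑ σ : Equiv.Perm (Fin (r * n)), Wt r n σ e =
      ∑ σ : Equiv.Perm (Fin (r * n)), Wt r n σ e' := by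
    intro e e' he he'
    obtain ⟨τ, hτe, -⟩ := glue4 e e e' e'
      (by rw [hKmem he, hKmem he']) (by rw [hKmem he, hKmem he'])
      (by rw [Finset.inter_self, Finset.inter_self, hKmem he, hKmem he'])
    calc ∑ σ : Equiv.Perm (Fin (r * n)), Wt r n σ e
        = ∑ σ : Equiv.Perm (Fin (r * n)), Wt r n (σ * τ) e := (hreindex τ _).symm
      _ = ∑ σ : Equiv.Perm (Fin (r * n)), Wt r n σ (e.image τ) := by
          apply Finset.sum_congr rfl; intro σ _; rw [hWtau]
      _ = ∑ σ : Equiv.Perm (Fin (r * n)), Wt r n σ e' := by rw [hτe]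
  -- mean zero
  have hS1 : ∀ e ∈ KK r n, ∑ σ : Equiv.Perm (Fin (r * n)), Wt r n σ e = 0 := by
    intro e he
    have h1 : ∑ e' ∈ KK r n, (∑ σ : Equiv.Perm (Fin (r * n)), Wt r n σ e') = 0 := by
      rw [Finset.sum_comm]
      simp only [hS4]
      exact Finset.sum_const_zero
    have h2 : ∑ e' ∈ KK r n, (∑ σ : Equiv.Perm (Fin (r * n)), Wt r n σ e') =
        ((KK r n).card : ℝ) * (∑ σ : Equiv.Perm (Fin (r * n)), Wt r n σ e) := by
      rw [← nsmul_eq_mul, ← Finset.sum_const]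
      exact Finset.sum_congr rfl (fun e' he' => hconst1 e' e he' he)
    rw [h2] at h1
    have hKne' : ((KK r n).card : ℝ) ≠ 0 := by
      rw [hKcard]; exact_mod_cast (ne_of_gt hCpos)
    exact (mul_eq_zero.mp h1).resolve_left hKne'
  -- vertex-sum is constant in σ, so S2 holds
  have hS2 : ∀ e ∈ KK r n, ∀ v : Fin (r * n),
      ∑ σ : Equiv.Perm (Fin (r * n)),
        (Wt r n σ e * ∑ f ∈ (KK r n).filter (fun f => v ∈ f), Wt r n σ f) = 0 := by
    intro e he v
    obtain ⟨u₀⟩ : Nonempty (Fin (r * n)) := by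
      refine ⟨⟨0, ?_⟩⟩
      have : 0 < r := by omega
      exact Nat.mul_pos this hn
    have hinner : ∀ σ : Equiv.Perm (Fin (r * n)),
        ∑ f ∈ (KK r n).filter (fun f => v ∈ f), Wt r n σ f =
        (((TT r n).filter (fun t => u₀ ∈ t)).card : ℝ) -
          (((KK r n).filter (fun f => v ∈ f)).card : ℝ) * p := by
      intro σ
      simp only [Wt]
      rw [Finset.sum_sub_distrib, Finset.sum_boole, Finset.sum_const, nsmul_eq_mul,
        Finset.filter_filter, hcountv σ v, count_T_mem r n (σ v) u₀]
    calc ∑ σ : Equiv.Perm (Fin (r * n)),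
          (Wt r n σ e * ∑ f ∈ (KK r n).filter (fun f => v ∈ f), Wt r n σ f)
        = ∑ σ : Equiv.Perm (Fin (r * n)),
            (Wt r n σ e * ((((TT r n).filter (fun t => u₀ ∈ t)).card : ℝ) -
              (((KK r n).filter (fun f => v ∈ f)).card : ℝ) * p)) := by
          apply Finset.sum_congr rfl; intro σ _; rw [hinner σ]
      _ = (∑ σ : Equiv.Perm (Fin (r * n)), Wt r n σ e) *
            ((((TT r n).filter (fun t => u₀ ∈ t)).card : ℝ) -
              (((KK r n).filter (fun f => v ∈ f)).card : ℝ) * p) := by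
          rw [Finset.sum_mul]
      _ = 0 := by rw [hS1 e he, zero_mul]
  have hp' : (n : ℝ) ^ r / (((r * n).choose r : ℕ) : ℝ) = p := rfl
  have hW1 : ∀ (σ : Equiv.Perm (Fin (r * n))) (e : Finset (Fin (r * n))),
      |Wt r n σ e| ≤ 1 := by
    intro σ e
    simp only [Wt, hp']
    split
    · rw [abs_le]; constructor <;> linarith
    · rw [abs_le]; constructor <;> linarith
  have hconst2 : ∀ e f e' f' : Finset (Fin (r * n)), e ∈ KK r n → f ∈ KK r n →
      e' ∈ KK r n → f' ∈ KK r n → (e ∩ f).card = (e' ∩ f').card →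
      ∑ σ : Equiv.Perm (Fin (r * n)), Wt r n σ e * Wt r n σ f =
      ∑ σ : Equiv.Perm (Fin (r * n)), Wt r n σ e' * Wt r n σ f' := by
    intro e f e' f' he hf he' hf' hef
    obtain ⟨τ, hτe, hτf⟩ := glue4 e f e' f'
      (by rw [hKmem he, hKmem he']) (by rw [hKmem hf, hKmem hf']) hef
    calc ∑ σ : Equiv.Perm (Fin (r * n)), Wt r n σ e * Wt r n σ f
        = ∑ σ : Equiv.Perm (Fin (r * n)), Wt r n (σ * τ) e * Wt r n (σ * τ) f :=
          (hreindex τ (fun σ => Wt r n σ e * Wt r n σ f)).symm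
      _ = ∑ σ : Equiv.Perm (Fin (r * n)), Wt r n σ (e.image τ) * Wt r n σ (f.image τ) := by
          apply Finset.sum_congr rfl; intro σ _; rw [hWtau, hWtau]
      _ = ∑ σ : Equiv.Perm (Fin (r * n)), Wt r n σ e' * Wt r n σ f' := by rw [hτe, hτf]
  set Q : ℝ := ((Finset.univ : Finset (Equiv.Perm (Fin (r * n)))).card : ℝ) with hQdef
  have hQ0 : 0 ≤ Q := by rw [hQdef]; exact Nat.cast_nonneg _
  have hcbound : ∀ e f : Finset (Fin (r * n)),
      |∑ σ : Equiv.Perm (Fin (r * n)), Wt r n σ e * Wt r n σ f| ≤ Q := by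
    intro e f
    calc |∑ σ : Equiv.Perm (Fin (r * n)), Wt r n σ e * Wt r n σ f|
        ≤ ∑ σ : Equiv.Perm (Fin (r * n)), |Wt r n σ e * Wt r n σ f| :=
          Finset.abs_sum_le_sum_abs _ _
      _ ≤ ∑ _σ : Equiv.Perm (Fin (r * n)), (1 : ℝ) := by
          apply Finset.sum_le_sum
          intro σ _
          rw [abs_mul]
          exact mul_le_one₀ (hW1 σ e) (abs_nonneg _) (hW1 σ f)
      _ = Q := by rw [Finset.sum_const, nsmul_eq_mul, mul_one, hQdef]
  have hm2 : ∀ e ∈ KK r n,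
      (((KK r n).filter (fun f => 2 ≤ (e ∩ f).card)).card : ℕ) ≤ r ^ 2 * (r * n) ^ (r - 2) := by
    intro e he
    have h1 : ((KK r n).filter (fun f => 2 ≤ (e ∩ f).card)).card ≤
        ((Finset.powersetCard 2 e) ×ˢ
          (Finset.powersetCard (r - 2) (Finset.univ : Finset (Fin (r * n))))).card := by
      classical
      set d : Finset (Fin (r * n)) → Finset (Fin (r * n)) := fun f =>
        if hf : 2 ≤ (e ∩ f).card then Classical.choose (Finset.exists_subset_card_eq hf)
        else ∅ with hd
      have hdspec : ∀ f : Finset (Fin (r * n)), 2 ≤ (e ∩ f).card →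
          d f ⊆ e ∩ f ∧ (d f).card = 2 := by
        intro f hf
        have hspec := Classical.choose_spec (Finset.exists_subset_card_eq hf)
        rw [hd]; simp only [dif_pos hf]
        exact hspec
      apply Finset.card_le_card_of_injOn (fun f => (d f, f \ d f))
      · intro f hf
        rw [Finset.mem_coe, Finset.mem_filter] at hf
        obtain ⟨hdsub, hdcard⟩ := hdspec f hf.2
        rw [Finset.mem_coe, Finset.mem_product]
        constructor
        · rw [Finset.mem_powersetCard]
          exact ⟨hdsub.trans Finset.inter_subset_left, hdcard⟩
        · rw [Finset.mem_powersetCard]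
          refine ⟨Finset.subset_univ _, ?_⟩
          rw [Finset.card_sdiff_of_subset (hdsub.trans Finset.inter_subset_right), hKmem hf.1, hdcard]
      · intro f hf g hg hfg
        simp only [Finset.coe_filter, Set.mem_setOf_eq] at hf hg
        obtain ⟨hdsubf, -⟩ := hdspec f hf.2
        obtain ⟨hdsubg, -⟩ := hdspec g hg.2
        have h3 : d f = d g ∧ f \ d f = g \ d g := by
          rwa [Prod.mk.injEq] at hfg
        calc f = f \ d f ∪ d f :=
              (Finset.sdiff_union_of_subset (hdsubf.trans Finset.inter_subset_right)).symm
          _ = g \ d g ∪ d g := by rw [h3.2, h3.1]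
          _ = g := Finset.sdiff_union_of_subset (hdsubg.trans Finset.inter_subset_right)
    rw [Finset.card_product, Finset.card_powersetCard, Finset.card_powersetCard,
      Finset.card_univ, Fintype.card_fin, hKmem he] at h1
    calc ((KK r n).filter (fun f => 2 ≤ (e ∩ f).card)).card
        ≤ r.choose 2 * (r * n).choose (r - 2) := h1
      _ ≤ r ^ 2 * (r * n) ^ (r - 2) := by
          have h4 := Nat.choose_le_pow r 2
          have h5 := Nat.choose_le_pow (r * n) (r - 2)
          exact Nat.mul_le_mul h4 h5
  -- per-edge bound on total covariance
  have hmainE : ∀ e ∈ KK r n,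
      ∑ f ∈ KK r n, |∑ σ : Equiv.Perm (Fin (r * n)), Wt r n σ e * Wt r n σ f| ≤
        (2 * (r : ℝ) + 2) * (((KK r n).filter (fun f => 2 ≤ (e ∩ f).card)).card : ℝ) * Q := by
    intro e he
    set c : Finset (Fin (r * n)) → ℝ :=
      fun f => ∑ σ : Equiv.Perm (Fin (r * n)), Wt r n σ e * Wt r n σ f with hcdef
    set K0 := (KK r n).filter (fun f => (e ∩ f).card = 0) with hK0
    set K1 := (KK r n).filter (fun f => (e ∩ f).card = 1) with hK1
    set K2 := (KK r n).filter (fun f => 2 ≤ (e ∩ f).card) with hK2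
    have hsplit : ∀ X : Finset (Fin (r * n)) → ℝ,
        ∑ f ∈ KK r n, X f = ∑ f ∈ K0, X f + ∑ f ∈ K1, X f + ∑ f ∈ K2, X f := by
      intro X
      have h12 : ∑ f ∈ (KK r n).filter (fun f => ¬(e ∩ f).card = 0), X f =
          ∑ f ∈ K1, X f + ∑ f ∈ K2, X f := by
        rw [← Finset.sum_filter_add_sum_filter_not
          ((KK r n).filter (fun f => ¬(e ∩ f).card = 0)) (fun f => (e ∩ f).card = 1) X,
          Finset.filter_filter, Finset.filter_filter]
        congr 1
        · apply Finset.sum_congr _ (fun _ _ => rfl)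
          apply Finset.filter_congr
          intro f _
          constructor
          · rintro ⟨-, h2⟩; exact h2
          · intro h2; omega
        · apply Finset.sum_congr _ (fun _ _ => rfl)
          apply Finset.filter_congr
          intro f _
          constructor
          · rintro ⟨h1, h2⟩; omega
          · intro h2; omega
      calc ∑ f ∈ KK r n, X f
          = ∑ f ∈ K0, X f + ∑ f ∈ (KK r n).filter (fun f => ¬(e ∩ f).card = 0), X f :=
            (Finset.sum_filter_add_sum_filter_not _ _ _).symm
        _ = ∑ f ∈ K0, X f + (∑ f ∈ K1, X f + ∑ f ∈ K2, X f) := by rw [h12]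
        _ = ∑ f ∈ K0, X f + ∑ f ∈ K1, X f + ∑ f ∈ K2, X f := by ring
    -- constancy on classes
    have habs : ∀ (j : ℕ) (KJ : Finset (Finset (Fin (r * n)))),
        KJ = (KK r n).filter (fun f => (e ∩ f).card = j) →
        ∑ f ∈ KJ, |c f| = |∑ f ∈ KJ, c f| := by
      intro j KJ hKJ
      rcases KJ.eq_empty_or_nonempty with hE | ⟨f₀, hf₀⟩
      · simp [hE]
      · have hcc : ∀ f ∈ KJ, c f = c f₀ := by
          intro f hf
          rw [hKJ, Finset.mem_filter] at hf hf₀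
          exact hconst2 e f e f₀ he hf.1 he hf₀.1 (by rw [hf.2, hf₀.2])
        have h1 : ∑ f ∈ KJ, c f = (KJ.card : ℕ) • c f₀ := by
          rw [← Finset.sum_const]
          exact Finset.sum_congr rfl hcc
        have h2 : ∑ f ∈ KJ, |c f| = (KJ.card : ℕ) • |c f₀| := by
          rw [← Finset.sum_const]
          exact Finset.sum_congr rfl (fun f hf => by rw [hcc f hf])
        rw [h1, h2, abs_nsmul]
    -- the two linear identities
    have hP3 : ∑ f ∈ KK r n, c f = 0 := by
      rw [hcdef]
      rw [Finset.sum_comm]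
      have : ∀ σ : Equiv.Perm (Fin (r * n)),
          ∑ f ∈ KK r n, Wt r n σ e * Wt r n σ f = 0 := by
        intro σ
        rw [← Finset.mul_sum, hS4, mul_zero]
      simp only [this]
      exact Finset.sum_const_zero
    have hP4 : ∑ f ∈ KK r n, ((e ∩ f).card : ℝ) * c f = 0 := by
      have hcard : ∀ f : Finset (Fin (r * n)), ((e ∩ f).card : ℝ) =
          ∑ v ∈ e, (if v ∈ f then (1 : ℝ) else 0) := by
        intro f
        rw [Finset.sum_boole]
        norm_cast
      calc ∑ f ∈ KK r n, ((e ∩ f).card : ℝ) * c f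
          = ∑ f ∈ KK r n, ∑ v ∈ e, (if v ∈ f then (1 : ℝ) else 0) * c f := by
            apply Finset.sum_congr rfl; intro f _; rw [hcard f, Finset.sum_mul]
        _ = ∑ v ∈ e, ∑ f ∈ KK r n, (if v ∈ f then (1 : ℝ) else 0) * c f := Finset.sum_comm
        _ = 0 := by
            apply Finset.sum_eq_zero
            intro v _
            have hstep : ∑ f ∈ KK r n, (if v ∈ f then (1 : ℝ) else 0) * c f =
                ∑ f ∈ (KK r n).filter (fun f => v ∈ f), c f := by
              rw [Finset.sum_filter]
              apply Finset.sum_congr rfl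
              intro f _
              rw [boole_mul]
            rw [hstep, hcdef]
            rw [Finset.sum_comm]
            calc ∑ σ : Equiv.Perm (Fin (r * n)),
                  ∑ f ∈ (KK r n).filter (fun f => v ∈ f), Wt r n σ e * Wt r n σ f
                = ∑ σ : Equiv.Perm (Fin (r * n)),
                    Wt r n σ e * ∑ f ∈ (KK r n).filter (fun f => v ∈ f), Wt r n σ f := by
                  apply Finset.sum_congr rfl; intro σ _; rw [Finset.mul_sum]
              _ = 0 := hS2 e he v
    -- bounds per class
    set M : ℝ := (K2.card : ℝ) with hM
    have hM0 : 0 ≤ M := by rw [hM]; exact Nat.cast_nonneg _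
    have hK2sum : ∑ f ∈ K2, |c f| ≤ M * Q := by
      calc ∑ f ∈ K2, |c f| ≤ ∑ _f ∈ K2, Q := Finset.sum_le_sum (fun f _ => hcbound e f)
        _ = M * Q := by rw [Finset.sum_const, nsmul_eq_mul, hM]
    have hjcb : ∀ f ∈ K2, |((e ∩ f).card : ℝ) * c f| ≤ (r : ℝ) * Q := by
      intro f hf
      simp only [abs_mul, Nat.abs_cast]
      apply mul_le_mul _ (hcbound e f) (abs_nonneg _) (by positivity)
      have : (e ∩ f).card ≤ r :=
        le_of_le_of_eq (Finset.card_le_card Finset.inter_subset_left) (hKmem he)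
      exact_mod_cast this
    have hK2jsum : |∑ f ∈ K2, ((e ∩ f).card : ℝ) * c f| ≤ M * ((r : ℝ) * Q) := by
      calc |∑ f ∈ K2, ((e ∩ f).card : ℝ) * c f| ≤ ∑ f ∈ K2, |((e ∩ f).card : ℝ) * c f| :=
            Finset.abs_sum_le_sum_abs _ _
        _ ≤ ∑ _f ∈ K2, (r : ℝ) * Q := Finset.sum_le_sum hjcb
        _ = M * ((r : ℝ) * Q) := by rw [Finset.sum_const, nsmul_eq_mul, hM]
    have hK1c : ∑ f ∈ K1, c f = -∑ f ∈ K2, ((e ∩ f).card : ℝ) * c f := by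
      have h1 := hsplit (fun f => ((e ∩ f).card : ℝ) * c f)
      rw [hP4] at h1
      have h2 : ∑ f ∈ K0, ((e ∩ f).card : ℝ) * c f = 0 := by
        apply Finset.sum_eq_zero
        intro f hf
        rw [hK0, Finset.mem_filter] at hf
        rw [hf.2]
        simp
      have h3 : ∑ f ∈ K1, ((e ∩ f).card : ℝ) * c f = ∑ f ∈ K1, c f := by
        apply Finset.sum_congr rfl
        intro f hf
        rw [hK1, Finset.mem_filter] at hf
        rw [hf.2]
        simp
      rw [h2, h3] at h1
      linarith
    have hK1sum : ∑ f ∈ K1, |c f| ≤ M * ((r : ℝ) * Q) := by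
      rw [habs 1 K1 hK1, hK1c, abs_neg]
      exact hK2jsum
    have hK0c : ∑ f ∈ K0, c f = -(∑ f ∈ K1, c f + ∑ f ∈ K2, c f) := by
      have h1 := hsplit c
      rw [hP3] at h1
      linarith
    have hK2csum : |∑ f ∈ K2, c f| ≤ M * Q := by
      calc |∑ f ∈ K2, c f| ≤ ∑ f ∈ K2, |c f| := Finset.abs_sum_le_sum_abs _ _
        _ ≤ M * Q := hK2sum
    have hK0sum : ∑ f ∈ K0, |c f| ≤ M * ((r : ℝ) * Q) + M * Q := by
      rw [habs 0 K0 hK0, hK0c, abs_neg]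
      calc |∑ f ∈ K1, c f + ∑ f ∈ K2, c f| ≤ |∑ f ∈ K1, c f| + |∑ f ∈ K2, c f| := abs_add_le _ _
        _ ≤ M * ((r : ℝ) * Q) + M * Q := by
            apply add_le_add _ hK2csum
            calc |∑ f ∈ K1, c f| ≤ ∑ f ∈ K1, |c f| := Finset.abs_sum_le_sum_abs _ _
              _ ≤ M * ((r : ℝ) * Q) := hK1sum
    calc ∑ f ∈ KK r n, |c f| = ∑ f ∈ K0, |c f| + ∑ f ∈ K1, |c f| + ∑ f ∈ K2, |c f| :=
          hsplit (fun f => |c f|)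
      _ ≤ (M * ((r : ℝ) * Q) + M * Q) + M * ((r : ℝ) * Q) + M * Q := by linarith
      _ = (2 * (r : ℝ) + 2) * M * Q := by ring
  -- inner product bound
  have hSef : ∀ e ∈ KK r n, ∀ f ∈ KK r n, |∑ i : Fin k, h e i * h f i| ≤ 1 := by
    intro e he f hf
    calc |∑ i : Fin k, h e i * h f i| ≤ ∑ i : Fin k, |h e i * h f i| :=
          Finset.abs_sum_le_sum_abs _ _
      _ ≤ ∑ i : Fin k, |h e i| := by
          apply Finset.sum_le_sum
          intro i _
          rw [abs_mul]
          have h1 : |h f i| ≤ 1 := by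
            calc |h f i| ≤ ∑ j : Fin k, |h f j| :=
                  Finset.single_le_sum (f := fun j => |h f j|)
                    (fun j _ => abs_nonneg _) (Finset.mem_univ i)
              _ ≤ 1 := hh f hf
          calc |h e i| * |h f i| ≤ |h e i| * 1 :=
                mul_le_mul_of_nonneg_left h1 (abs_nonneg _)
            _ = |h e i| := mul_one _
      _ ≤ 1 := hh e he
  set D : ℝ := (2 * (r : ℝ) + 2) * (r : ℝ) ^ 2 * ((r : ℝ) * (n : ℝ)) ^ (2 * r - 2) with hD
  have htotal : ∑ σ : Equiv.Perm (Fin (r * n)),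
      ∑ i : Fin k, (∑ e ∈ KK r n, Wt r n σ e * h e i) ^ 2 ≤ D * Q := by
    have hexp : ∀ σ : Equiv.Perm (Fin (r * n)),
        ∑ i : Fin k, (∑ e ∈ KK r n, Wt r n σ e * h e i) ^ 2 =
        ∑ e ∈ KK r n, ∑ f ∈ KK r n,
          (Wt r n σ e * Wt r n σ f) * (∑ i : Fin k, h e i * h f i) := by
      intro σ
      calc ∑ i : Fin k, (∑ e ∈ KK r n, Wt r n σ e * h e i) ^ 2
          = ∑ i : Fin k, ∑ e ∈ KK r n, ∑ f ∈ KK r n,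
              (Wt r n σ e * h e i) * (Wt r n σ f * h f i) := by
            apply Finset.sum_congr rfl
            intro i _
            rw [sq, Finset.sum_mul_sum]
        _ = ∑ e ∈ KK r n, ∑ i : Fin k, ∑ f ∈ KK r n,
              (Wt r n σ e * h e i) * (Wt r n σ f * h f i) := Finset.sum_comm
        _ = ∑ e ∈ KK r n, ∑ f ∈ KK r n, ∑ i : Fin k,
              (Wt r n σ e * h e i) * (Wt r n σ f * h f i) := by
            apply Finset.sum_congr rfl
            intro e _
            exact Finset.sum_comm
        _ = ∑ e ∈ KK r n, ∑ f ∈ KK r n,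
              (Wt r n σ e * Wt r n σ f) * (∑ i : Fin k, h e i * h f i) := by
            apply Finset.sum_congr rfl
            intro e _
            apply Finset.sum_congr rfl
            intro f _
            rw [Finset.mul_sum]
            apply Finset.sum_congr rfl
            intro i _
            rw [mul_mul_mul_comm]
    calc ∑ σ : Equiv.Perm (Fin (r * n)),
          ∑ i : Fin k, (∑ e ∈ KK r n, Wt r n σ e * h e i) ^ 2
        = ∑ σ : Equiv.Perm (Fin (r * n)), ∑ e ∈ KK r n, ∑ f ∈ KK r n,
            (Wt r n σ e * Wt r n σ f) * (∑ i : Fin k, h e i * h f i) := by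
          apply Finset.sum_congr rfl
          intro σ _
          exact hexp σ
      _ = ∑ e ∈ KK r n, ∑ f ∈ KK r n,
            (∑ σ : Equiv.Perm (Fin (r * n)), Wt r n σ e * Wt r n σ f) *
              (∑ i : Fin k, h e i * h f i) := by
          rw [Finset.sum_comm]
          apply Finset.sum_congr rfl
          intro e _
          rw [Finset.sum_comm]
          apply Finset.sum_congr rfl
          intro f _
          rw [Finset.sum_mul]
      _ ≤ ∑ e ∈ KK r n, ∑ f ∈ KK r n,
            |∑ σ : Equiv.Perm (Fin (r * n)), Wt r n σ e * Wt r n σ f| := by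
          apply Finset.sum_le_sum
          intro e he
          apply Finset.sum_le_sum
          intro f hf
          calc (∑ σ : Equiv.Perm (Fin (r * n)), Wt r n σ e * Wt r n σ f) *
                (∑ i : Fin k, h e i * h f i)
              ≤ |(∑ σ : Equiv.Perm (Fin (r * n)), Wt r n σ e * Wt r n σ f) *
                  (∑ i : Fin k, h e i * h f i)| := le_abs_self _
            _ = |∑ σ : Equiv.Perm (Fin (r * n)), Wt r n σ e * Wt r n σ f| *
                  |∑ i : Fin k, h e i * h f i| := abs_mul _ _
            _ ≤ |∑ σ : Equiv.Perm (Fin (r * n)), Wt r n σ e * Wt r n σ f| * 1 :=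
                mul_le_mul_of_nonneg_left (hSef e he f hf) (abs_nonneg _)
            _ = |∑ σ : Equiv.Perm (Fin (r * n)), Wt r n σ e * Wt r n σ f| := mul_one _
      _ ≤ ∑ _e ∈ KK r n,
            ((2 * (r : ℝ) + 2) * ((r ^ 2 * (r * n) ^ (r - 2) : ℕ) : ℝ) * Q) := by
          apply Finset.sum_le_sum
          intro e he
          calc ∑ f ∈ KK r n, |∑ σ : Equiv.Perm (Fin (r * n)), Wt r n σ e * Wt r n σ f|
              ≤ (2 * (r : ℝ) + 2) *
                  (((KK r n).filter (fun f => 2 ≤ (e ∩ f).card)).card : ℝ) * Q :=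
                hmainE e he
            _ ≤ (2 * (r : ℝ) + 2) * ((r ^ 2 * (r * n) ^ (r - 2) : ℕ) : ℝ) * Q := by
                apply mul_le_mul_of_nonneg_right _ hQ0
                apply mul_le_mul_of_nonneg_left _ (by positivity)
                exact_mod_cast hm2 e he
      _ ≤ D * Q := by
          rw [Finset.sum_const, nsmul_eq_mul, hKcard]
          have hKle : (((r * n).choose r : ℕ) : ℝ) ≤ (((r * n) ^ r : ℕ) : ℝ) := by
            exact_mod_cast Nat.choose_le_pow (r * n) r
          calc (((r * n).choose r : ℕ) : ℝ) *
                ((2 * (r : ℝ) + 2) * ((r ^ 2 * (r * n) ^ (r - 2) : ℕ) : ℝ) * Q)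
              ≤ (((r * n) ^ r : ℕ) : ℝ) *
                ((2 * (r : ℝ) + 2) * ((r ^ 2 * (r * n) ^ (r - 2) : ℕ) : ℝ) * Q) := by
                apply mul_le_mul_of_nonneg_right hKle
                exact mul_nonneg (mul_nonneg (by positivity) (Nat.cast_nonneg _)) hQ0
            _ = D * Q := by
                have hpow : ((r : ℝ) * n) ^ (2 * r - 2) =
                    ((r : ℝ) * n) ^ r * ((r : ℝ) * n) ^ (r - 2) := by
                  rw [← pow_add]; congr 1; omega
                rw [hD, hpow]
                push_cast
                ring
  -- extract a good permutation
  have hex : ∃ σ : Equiv.Perm (Fin (r * n)),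
      ∑ i : Fin k, (∑ e ∈ KK r n, Wt r n σ e * h e i) ^ 2 ≤ D := by
    have hconst : ∑ _σ : Equiv.Perm (Fin (r * n)), D = D * Q := by
      rw [Finset.sum_const, nsmul_eq_mul, hQdef]; ring
    have h1 : ∑ σ : Equiv.Perm (Fin (r * n)),
        ∑ i : Fin k, (∑ e ∈ KK r n, Wt r n σ e * h e i) ^ 2 ≤
        ∑ _σ : Equiv.Perm (Fin (r * n)), D := by rw [hconst]; exact htotal
    obtain ⟨σ, -, hσ⟩ := Finset.exists_le_of_sum_le Finset.univ_nonempty h1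
    exact ⟨σ, hσ⟩
  obtain ⟨σ, hσ⟩ := hex
  refine ⟨σ, ?_⟩
  have hXi : ∀ i : Fin k,
      (∑ e ∈ (KK r n).filter
        (fun s => ∀ q : Fin r, (s.filter fun v => pz r n (σ v) = q).card = 1), h e i) -
        p * ∑ e ∈ KK r n, h e i = ∑ e ∈ KK r n, Wt r n σ e * h e i := by
    intro i
    simp only [Wt, hp', sub_mul, boole_mul]
    rw [Finset.sum_sub_distrib, ← Finset.mul_sum, ← Finset.sum_filter]
  have hD0 : 0 ≤ D := by
    rw [hD]; positivity
  have habs2 : ∑ i : Fin k, |∑ e ∈ KK r n, Wt r n σ e * h e i| ≤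
      Real.sqrt (D * k) := by
    have hnn : 0 ≤ ∑ i : Fin k, |∑ e ∈ KK r n, Wt r n σ e * h e i| :=
      Finset.sum_nonneg (fun i _ => abs_nonneg _)
    rw [Real.le_sqrt hnn (by positivity)]
    calc (∑ i : Fin k, |∑ e ∈ KK r n, Wt r n σ e * h e i|) ^ 2
        ≤ (∑ i : Fin k, |∑ e ∈ KK r n, Wt r n σ e * h e i| ^ 2) *
            (∑ _i : Fin k, (1 : ℝ) ^ 2) := by
          have := Finset.sum_mul_sq_le_sq_mul_sq Finset.univ
            (fun i => |∑ e ∈ KK r n, Wt r n σ e * h e i|) (fun _ => (1 : ℝ))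
          simpa using this
      _ = (∑ i : Fin k, (∑ e ∈ KK r n, Wt r n σ e * h e i) ^ 2) * k := by
          simp [sq_abs]
      _ ≤ D * k := by
          apply mul_le_mul_of_nonneg_right hσ (by positivity)
  have hsqrtD : Real.sqrt (D * k) =
      (Real.sqrt ((2 * (r : ℝ) + 2) * (r : ℝ) ^ 2) * (r : ℝ) ^ (r - 1)) *
        Real.sqrt k * (n : ℝ) ^ (r - 1) := by
    have hb : ((r : ℝ) * (n : ℝ)) ^ (2 * r - 2) =
        ((r : ℝ) ^ (r - 1) * (n : ℝ) ^ (r - 1)) ^ 2 := by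
      rw [← mul_pow, ← pow_mul]
      congr 1
      omega
    have hDk : D * k = ((2 * (r : ℝ) + 2) * (r : ℝ) ^ 2) *
        (((r : ℝ) ^ (r - 1) * (n : ℝ) ^ (r - 1)) ^ 2 * k) := by
      rw [hD, hb]; ring
    rw [hDk,
      Real.sqrt_mul (x := (2 * (r : ℝ) + 2) * (r : ℝ) ^ 2) (by positivity),
      Real.sqrt_mul (x := ((r : ℝ) ^ (r - 1) * (n : ℝ) ^ (r - 1)) ^ 2) (by positivity),
      Real.sqrt_sq (x := (r : ℝ) ^ (r - 1) * (n : ℝ) ^ (r - 1)) (by positivity)]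
    ring
  calc ∑ i : Fin k,
        |(∑ e ∈ (KK r n).filter
            (fun s => ∀ q : Fin r, (s.filter fun v => pz r n (σ v) = q).card = 1), h e i) -
          p * ∑ e ∈ KK r n, h e i|
      = ∑ i : Fin k, |∑ e ∈ KK r n, Wt r n σ e * h e i| := by
        apply Finset.sum_congr rfl
        intro i _
        rw [hXi i]
    _ ≤ Real.sqrt (D * k) := habs2
    _ = (Real.sqrt ((2 * (r : ℝ) + 2) * (r : ℝ) ^ 2) * (r : ℝ) ^ (r - 1)) *
          Real.sqrt k * (n : ℝ) ^ (r - 1) := hsqrtD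
    _ = (Real.sqrt ((2 * ↑r + 2) * (r : ℝ) ^ 2) * (r : ℝ) ^ (r - 1)) *
          Real.sqrt k * (n : ℝ) ^ (r - 1) := by norm_num


/-- for each `r ≥ 2` there is a constant `A_r > 0` such that the vertex set of
`K_{rn}^{(r)}` can be partitioned into `r` parts of size `n` so that the set of hyperedges
meeting every part exactly once is almost representative:
`‖h(H) − (n^r/C(rn,r))·h(E)‖₁ ≤ A_r·√k·n^{r-1}`. -/
theorem stmt_12 :
    ∀ r : ℕ, 2 ≤ r →
      ∃ A : ℝ, 0 < A ∧
        ∀ (n k : ℕ), 1 ≤ n → 1 ≤ k →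
          ∀ h : Finset (Fin (r * n)) → Fin k → ℝ,
            (∀ e ∈ Finset.powersetCard r (Finset.univ : Finset (Fin (r * n))),
                ∑ i : Fin k, |h e i| ≤ 1) →
            ∃ π : Fin (r * n) → Fin r,
              (∀ p : Fin r, (Finset.univ.filter fun v => π v = p).card = n) ∧
              ∑ i : Fin k,
                  |(∑ e ∈ (Finset.powersetCard r (Finset.univ : Finset (Fin (r * n)))).filter
                        (fun s => ∀ p : Fin r, (s.filter fun v => π v = p).card = 1), h e i) -
                    ((n : ℝ) ^ r / (((r * n).choose r : ℕ) : ℝ)) *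
                      ∑ e ∈ Finset.powersetCard r (Finset.univ : Finset (Fin (r * n))), h e i|
                ≤ A * Real.sqrt k * (n : ℝ) ^ (r - 1) := by
  intro r hr
  refine ⟨Real.sqrt ((2 * r + 2) * r ^ 2) * r ^ (r - 1), ?_, ?_⟩
  · have hrpos : (0 : ℝ) < (r : ℝ) := by
      have : 0 < r := by omega
      exact_mod_cast this
    have h1 : (0 : ℝ) < (2 * (r : ℝ) + 2) * (r : ℝ) ^ 2 := by positivity
    exact mul_pos (Real.sqrt_pos.mpr h1) (pow_pos hrpos _)
  · intro n k hn hk h hh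
    obtain ⟨σ, hσ⟩ := main_lemma' r n k hr hn hk h hh
    refine ⟨fun v => pz r n (σ v), ?_, ?_⟩
    · intro q
      have himg : (Finset.univ.filter fun v => pz r n (σ v) = q) =
          Finset.image σ.symm (Finset.univ.filter fun v => pz r n v = q) := by
        ext v
        simp only [Finset.mem_filter, Finset.mem_univ, true_and, Finset.mem_image]
        constructor
        · intro hv
          exact ⟨σ v, hv, σ.symm_apply_apply v⟩
        · rintro ⟨w, hw, rfl⟩
          simpa [σ.apply_symm_apply] using hw
      rw [himg, Finset.card_image_of_injective _ σ.symm.injective, card_fiber]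
    · exact hσ
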